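/- Let x ∈ ℝⁿ and suppose x' = Σ_{i=0}^{d} F_i x^{[i]} for matrices F_i ∈ ℝ^{n × nⁱ}. Then for every j ∈ ℕ, (x')^{[j]} = Σ_{k=0}^{jd} ( Σ_{(i_1,…,i_j) ∈ H_{j,k}} F_{i_1} ⊗ ⋯ ⊗ F_{i_j} ) x^{[k]}, where H_{j,k} = { (i_1,…,i_j) : Σ_{l=1}^j i_l = k and each i_l ≤ d }. -/

import Mathlib

/-- `k`-th Kronecker power of a vector `x ∈ ℝ^n`, indexed by multi-indices. -/
def vecPow {n : ℕ} (x : Fin n → ℝ) (k : ℕ) : (Fin k → Fin n) → ℝ :=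
  fun b => ∏ l, x (b l)

/-- Position of the `m2`-th coordinate of the `l`-th block in the concatenation of
blocks of sizes `idx 0, …, idx (j-1)` (total size `k`).  This realizes the canonical
bijection `Fin k ≃ Σ l, Fin (idx l)` underlying the Kronecker product layout. -/
def sigmaIdx {j k : ℕ} (idx : Fin j → ℕ) (h : (∑ l, idx l) = k) (l : Fin j)
    (m2 : Fin (idx l)) : Fin k :=
  ⟨(∑ l' ∈ Finset.univ.filter (fun l' => l' < l), idx l') + (m2 : ℕ), by
    have h1 : (m2 : ℕ) < idx l := m2.isLt
    have h2 : idx l + ∑ l' ∈ Finset.univ.filter (fun l' => l' < l), idx l' ≤ ∑ l', idx l' := by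
      rw [← Finset.sum_insert (by simp)]
      exact Finset.sum_le_sum_of_subset (Finset.subset_univ _)
    omega⟩

lemma sigmaIdx_bijective {j k : ℕ} (idx : Fin j → ℕ) (h : (∑ l, idx l) = k) :
    Function.Bijective (fun p : Σ l, Fin (idx l) => sigmaIdx idx h p.1 p.2) := by
  rw [Fintype.bijective_iff_injective_and_card]
  constructor
  · rintro ⟨l1, m1⟩ ⟨l2, m2⟩ heq
    have hv : (sigmaIdx idx h l1 m1 : ℕ) = (sigmaIdx idx h l2 m2 : ℕ) := congrArg Fin.val heq
    simp only [sigmaIdx] at hv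
    have key : ∀ a b : Fin j, a < b →
        (∑ l' ∈ Finset.univ.filter (fun l' => l' < a), idx l') + idx a
          ≤ ∑ l' ∈ Finset.univ.filter (fun l' => l' < b), idx l' := by
      intro a b hab
      have hsub : insert a (Finset.univ.filter (fun l' => l' < a))
          ⊆ Finset.univ.filter (fun l' => l' < b) := by
        intro l' hl'
        simp only [Finset.mem_insert, Finset.mem_filter, Finset.mem_univ, true_and] at hl' ⊢
        rcases hl' with rfl | hl'
        · exact hab
        · exact hl'.trans hab
      calc (∑ l' ∈ Finset.univ.filter (fun l' => l' < a), idx l') + idx a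
          = ∑ l' ∈ insert a (Finset.univ.filter (fun l' => l' < a)), idx l' := by
            rw [Finset.sum_insert (by simp)]; ring
        _ ≤ _ := Finset.sum_le_sum_of_subset hsub
    have hl : l1 = l2 := by
      by_contra hne
      rcases lt_or_gt_of_ne hne with hlt | hlt
      · have := key l1 l2 hlt; have := m1.isLt; have := m2.isLt; omega
      · have := key l2 l1 hlt; have := m1.isLt; have := m2.isLt; omega
    subst hl
    have : (m1 : ℕ) = m2 := by omega
    exact congrArg (Sigma.mk l1) (Fin.ext this)
  · simp [Fintype.card_sigma, h]

lemma prod_sum_key {n j k : ℕ} (idx : Fin j → ℕ) (h : (∑ l, idx l) = k)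
    (f : (l : Fin j) → (Fin (idx l) → Fin n) → ℝ) (x : Fin n → ℝ) :
    (∏ l, ∑ c : Fin (idx l) → Fin n, f l c * ∏ m, x (c m))
      = ∑ b : Fin k → Fin n,
          (∏ l, f l (fun m2 => b (sigmaIdx idx h l m2))) * ∏ m, x (b m) := by
  classical
  set e : (Σ l, Fin (idx l)) → Fin k := fun p => sigmaIdx idx h p.1 p.2 with he
  have hbij := sigmaIdx_bijective idx h
  rw [Finset.prod_univ_sum, Fintype.piFinset_univ]
  symm
  have hΦ : Function.Bijective
      (fun (b : Fin k → Fin n) (l : Fin j) (m2 : Fin (idx l)) => b (e ⟨l, m2⟩)) := by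
    have h1 : Function.Bijective (fun b : Fin k → Fin n => b ∘ e) := by
      constructor
      · intro b b' hb
        funext m
        obtain ⟨p, rfl⟩ := hbij.surjective m
        exact congrFun hb p
      · intro c
        obtain ⟨einv, hinv, _⟩ := Function.bijective_iff_has_inverse.mp hbij
        refine ⟨c ∘ einv, ?_⟩
        funext p
        simp [Function.comp, he, hinv p]
    exact (Equiv.piCurry fun _ _ => Fin n).bijective.comp h1
  refine Fintype.sum_bijective _ hΦ _ _ (fun b => ?_)
  have hx : (∏ m, x (b m)) = ∏ l, ∏ m2 : Fin (idx l), x (b (e ⟨l, m2⟩)) := by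
    rw [← Fintype.prod_bijective e hbij (fun p => x (b (e p))) (fun m => x (b m)) (fun _ => rfl)]
    rw [← Finset.univ_sigma_univ, Finset.prod_sigma]
  rw [hx, ← Finset.prod_mul_distrib]

/-- The matrix `A_{j,k} = Σ_{(i_1,…,i_j) ∈ H_{j,k}} F_{i_1} ⊗ ⋯ ⊗ F_{i_j}`, where
`H_{j,k}` is the set of `j`-tuples with entries in `{0,…,d}` summing to `k`.
Rows are indexed by multi-indices in `(Fin j → Fin n)` (i.e. `ℝ^{n^j}`) and columns
by `(Fin k → Fin n)` (i.e. `ℝ^{n^k}`). -/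
def Amat {n : ℕ} (d : ℕ) (F : (i : Fin (d+1)) → Matrix (Fin n) (Fin (i : ℕ) → Fin n) ℝ)
    (j k : ℕ) : Matrix (Fin j → Fin n) (Fin k → Fin n) ℝ :=
  ∑ idx : Fin j → Fin (d+1),
    if h : (∑ l, ((idx l : ℕ))) = k then
      Matrix.of (fun a b =>
        ∏ l, F (idx l) (a l) (fun m2 => b (sigmaIdx (fun l' => ((idx l' : ℕ))) h l m2)))
    else 0

lemma Amat_mulVec {n d : ℕ} (F : (i : Fin (d+1)) → Matrix (Fin n) (Fin (i : ℕ) → Fin n) ℝ)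
    (j k : ℕ) (v : (Fin k → Fin n) → ℝ) (a : Fin j → Fin n) :
    (Amat d F j k).mulVec v a
      = ∑ idx : Fin j → Fin (d+1),
          if h : (∑ l, ((idx l : ℕ))) = k then
            ∑ b : Fin k → Fin n,
              (∏ l, F (idx l) (a l) (fun m2 => b (sigmaIdx (fun l' => ((idx l' : ℕ))) h l m2)))
                * v b
          else 0 := by
  simp only [Amat, Matrix.mulVec, dotProduct, Matrix.sum_apply, dite_apply,
    Pi.zero_apply, Matrix.of_apply, Finset.sum_mul]
  rw [Finset.sum_comm]
  refine Finset.sum_congr rfl fun idx _ => ?_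
  by_cases h : (∑ l, ((idx l : ℕ))) = k
  · simp only [dif_pos h, Matrix.of_apply]
  · simp only [dif_neg h, Matrix.zero_apply, zero_mul, Finset.sum_const_zero]

/-- If `x' = Σ_{i=0}^{d} F_i x^{[i]}`, then for every `j`,
`(x')^{[j]} = Σ_{k=0}^{jd} (Σ_{(i_1,…,i_j) ∈ H_{j,k}} F_{i_1} ⊗ ⋯ ⊗ F_{i_j}) x^{[k]}`. -/
theorem vecPow_of_polynomial_step {n d : ℕ} (x x' : Fin n → ℝ)
    (F : (i : Fin (d+1)) → Matrix (Fin n) (Fin (i : ℕ) → Fin n) ℝ)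
    (hx : x' = ∑ i : Fin (d+1), (F i).mulVec (vecPow x (i : ℕ)))
    (j : ℕ) :
    vecPow x' j = ∑ k ∈ Finset.range (j * d + 1), (Amat d F j k).mulVec (vecPow x k) := by
  classical
  subst hx
  funext a
  have hmem : ∀ idx : Fin j → Fin (d+1), (∑ l, ((idx l : ℕ))) ∈ Finset.range (j * d + 1) := by
    intro idx
    have : (∑ l, ((idx l : ℕ))) ≤ ∑ _l : Fin j, d :=
      Finset.sum_le_sum fun l _ => Nat.lt_succ_iff.mp (idx l).isLt
    simp only [Finset.sum_const, Finset.card_univ, Fintype.card_fin, smul_eq_mul] at this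
    simp only [Finset.mem_range]
    omega
  have hR : (∑ k ∈ Finset.range (j * d + 1), (Amat d F j k).mulVec (vecPow x k)) a
      = ∑ idx : Fin j → Fin (d+1), ∑ b : Fin (∑ l, ((idx l : ℕ))) → Fin n,
          (∏ l, F (idx l) (a l) (fun m2 => b (sigmaIdx (fun l' => ((idx l' : ℕ))) rfl l m2)))
            * vecPow x (∑ l, ((idx l : ℕ))) b := by
    rw [Finset.sum_apply]
    simp only [Amat_mulVec]
    rw [Finset.sum_comm]
    refine Finset.sum_congr rfl fun idx _ => ?_
    rw [Finset.sum_dite_eq, if_pos (hmem idx)]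
  rw [hR]
  simp only [vecPow, Finset.sum_apply, Matrix.mulVec, dotProduct]
  rw [Finset.prod_univ_sum, Fintype.piFinset_univ]
  refine Finset.sum_congr rfl fun idx _ => ?_
  exact prod_sum_key (fun l => ((idx l : ℕ))) rfl (fun l c => F (idx l) (a l) c) x
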